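/- Let p = 4m+1 be prime with m ≥ 1, and let a : {0,…,2m} → ZMod p satisfy a_i² ≠ a_j² for all i ≠ j. Then for all u, v ∈ ZMod p, the determinant of the (2m+1)×(2m+1) matrix over ZMod p with (i,j) entry χ(a_i + a_j) + χ(a_i − a_j) + u·χ(a_i² + v·a_j²) equals (−1)^{m(2m+1)} · u^{2m+1} · v^{m(2m+1)} · (∏_{r=0}^{2m} binom(2m, r)) · ∏_{0≤i<j≤2m} (a_j² − a_i²)², where the integer factors are reduced mod p. -/
import Mathlib

open Matrix BigOperators Finset

def Cmat {R : Type*} [CommRing R] (m : ℕ) (u v : R) :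
    Matrix (Fin (2 * m + 1)) (Fin (2 * m + 1)) R :=
  Matrix.of fun s r =>
    (if (s : ℕ) + (r : ℕ) = m then (2 * ((2 * m).choose (2 * (s : ℕ))) : R) else 0)
    + (if (s : ℕ) + (r : ℕ) = 2 * m then u * ((2 * m).choose (s : ℕ)) * (v ^ (r : ℕ)) else 0)

lemma antidiag_det {R : Type*} [CommRing R] :
    ∀ (n : ℕ) (M : Matrix (Fin n) (Fin n) R),
      (∀ i j : Fin n, n - 1 < (i : ℕ) + (j : ℕ) → M i j = 0) →
      M.det = (-1 : R) ^ (n.choose 2) * ∏ i, M i (Fin.rev i) := by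
  intro n
  induction n with
  | zero => intro M h; simp [Matrix.det_fin_zero]
  | succ n ih =>
    intro M h
    rw [Matrix.det_succ_row M (Fin.last n)]
    rw [Finset.sum_eq_single (0 : Fin (n + 1))]
    · have hsub : (M.submatrix (Fin.last n).succAbove (0 : Fin (n+1)).succAbove).det
          = (-1 : R) ^ (n.choose 2) * ∏ i, M (Fin.castSucc i) (Fin.rev i).succ := by
        rw [ih _ (fun i j hij => ?_)]
        · congr 1
          apply Finset.prod_congr rfl
          intro i _
          simp [Fin.succAbove_last, Fin.zero_succAbove]
        · simp only [Matrix.submatrix_apply, Fin.succAbove_last, Fin.zero_succAbove]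
          apply h
          simp only [Fin.coe_castSucc, Fin.val_succ]
          omega
      rw [hsub]
      rw [Fin.prod_univ_castSucc (fun i : Fin (n+1) => M i (Fin.rev i))]
      have h1 : Fin.rev (Fin.last n) = 0 := by simp
      have h2 : ∀ i : Fin n, Fin.rev (Fin.castSucc i) = (Fin.rev i).succ := by
        intro i; rw [Fin.rev_castSucc]
      have h3 : (n+1).choose 2 = n + n.choose 2 := by
        rw [Nat.choose_succ_succ, Nat.choose_one_right]
      rw [h3, h1]
      simp only [Fin.rev_castSucc, Fin.val_last, Fin.val_zero, pow_zero, pow_add]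
      ring
    · intro j _ hj
      have : M (Fin.last n) j = 0 := by
        apply h
        simp only [Fin.val_last]
        have : 0 < (j : ℕ) := by
          rcases Nat.eq_zero_or_pos (j : ℕ) with h0 | h0
          · exact absurd (Fin.ext h0 : j = 0) hj
          · exact h0
        omega
      simp [this]
    · intro habs; exact absurd (Finset.mem_univ _) habs


lemma even_add_pow {R : Type*} [CommRing R] (m : ℕ) (x y : R) :
    (x + y) ^ (2 * m) + (x - y) ^ (2 * m)
      = ∑ s ∈ Finset.range (m + 1),
          (2 * ((2 * m).choose (2 * s)) : R) * (x ^ 2) ^ s * (y ^ 2) ^ (m - s) := by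
  rw [add_pow, sub_eq_add_neg, add_pow, ← Finset.sum_add_distrib]
  have key : ∀ k ∈ Finset.range (2 * m + 1),
      (x ^ k * y ^ (2 * m - k) * ((2 * m).choose k : R)
        + x ^ k * (-y) ^ (2 * m - k) * ((2 * m).choose k : R))
      = if Even k then 2 * ((2 * m).choose k : R) * x ^ k * y ^ (2 * m - k) else 0 := by
    intro k hk
    simp only [Finset.mem_range] at hk
    by_cases he : Even k
    · have : Even (2 * m - k) := by
        rcases he with ⟨t, ht⟩
        exact ⟨m - t, by omega⟩
      rw [this.neg_pow, if_pos he]; ring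
    · have hko : k % 2 = 1 := Nat.not_even_iff.mp he
      have : Odd (2 * m - k) := ⟨m - (k+1)/2, by omega⟩
      rw [this.neg_pow, if_neg he]; ring
  rw [Finset.sum_congr rfl key]
  rw [← Finset.sum_filter]
  have hfil : (Finset.range (2 * m + 1)).filter (fun k => Even k)
      = (Finset.range (m + 1)).image (fun s => 2 * s) := by
    ext k
    simp only [Finset.mem_filter, Finset.mem_range, Finset.mem_image]
    constructor
    · rintro ⟨hk, t, ht⟩
      exact ⟨t, by omega, by omega⟩
    · rintro ⟨t, ht, rfl⟩
      exact ⟨by omega, t, by omega⟩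
  rw [hfil, Finset.sum_image (fun a _ b _ h => by omega)]
  apply Finset.sum_congr rfl
  intro s hs
  simp only [Finset.mem_range] at hs
  have h1 : x ^ (2 * s) = (x ^ 2) ^ s := by rw [← pow_mul]
  have h2 : y ^ (2 * m - 2 * s) = (y ^ 2) ^ (m - s) := by
    rw [← pow_mul]; congr 1; omega
  rw [h1, h2]


lemma entry_eq {R : Type*} [CommRing R] (m : ℕ) (u v x y : R) :
    (x + y) ^ (2 * m) + (x - y) ^ (2 * m) + u * (x ^ 2 + v * y ^ 2) ^ (2 * m)
      = ∑ s : Fin (2 * m + 1), ∑ r : Fin (2 * m + 1),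
          (x ^ 2) ^ (s : ℕ) * Cmat m u v s r * (y ^ 2) ^ (r : ℕ) := by
  have hsplit : ∀ s r : Fin (2 * m + 1),
      (x ^ 2) ^ (s : ℕ) * Cmat m u v s r * (y ^ 2) ^ (r : ℕ)
      = (x ^ 2) ^ (s : ℕ) *
          (if (s : ℕ) + (r : ℕ) = m then (2 * ((2 * m).choose (2 * (s : ℕ))) : R) else 0)
          * (y ^ 2) ^ (r : ℕ)
        + (x ^ 2) ^ (s : ℕ) *
          (if (s : ℕ) + (r : ℕ) = 2 * m then u * ((2 * m).choose (s : ℕ)) * (v ^ (r : ℕ)) else 0)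
          * (y ^ 2) ^ (r : ℕ) := by
    intro s r; simp only [Cmat, Matrix.of_apply]; ring
  rw [Finset.sum_congr rfl (fun s _ => Finset.sum_congr rfl (fun r _ => hsplit s r))]
  rw [Finset.sum_congr rfl (fun s _ => Finset.sum_add_distrib), Finset.sum_add_distrib]
  -- convert to range sums
  have toRange : ∀ (g : ℕ → ℕ → R),
      (∑ s : Fin (2 * m + 1), ∑ r : Fin (2 * m + 1), g (s : ℕ) (r : ℕ))
      = ∑ s ∈ Finset.range (2 * m + 1), ∑ r ∈ Finset.range (2 * m + 1), g s r := by
    intro g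
    rw [Fin.sum_univ_eq_sum_range (fun s => ∑ r : Fin (2 * m + 1), g s (r : ℕ))]
    exact Finset.sum_congr rfl (fun s _ => Fin.sum_univ_eq_sum_range (fun r => g s r) _)
  rw [toRange (fun s r => (x ^ 2) ^ s *
        (if s + r = m then (2 * ((2 * m).choose (2 * s)) : R) else 0) * (y ^ 2) ^ r),
      toRange (fun s r => (x ^ 2) ^ s *
        (if s + r = 2 * m then u * ((2 * m).choose s : R) * v ^ r else 0) * (y ^ 2) ^ r)]
  have P1 : (∑ s ∈ Finset.range (2 * m + 1), ∑ r ∈ Finset.range (2 * m + 1),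
        (x ^ 2) ^ s * (if s + r = m then (2 * ((2 * m).choose (2 * s)) : R) else 0) * (y ^ 2) ^ r)
      = (x + y) ^ (2 * m) + (x - y) ^ (2 * m) := by
    rw [even_add_pow]
    rw [← Finset.sum_subset (Finset.range_subset_range.mpr (by omega : m + 1 ≤ 2 * m + 1))
        (fun s _ hs => ?_)]
    · apply Finset.sum_congr rfl
      intro s hs
      simp only [Finset.mem_range] at hs
      rw [Finset.sum_eq_single (m - s)]
      · rw [if_pos (by omega)]; ring
      · intro r _ hr
        rw [if_neg (by omega)]; ring
      · intro habs
        exact absurd (Finset.mem_range.mpr (by omega)) habs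
    · apply Finset.sum_eq_zero
      intro r _
      simp only [Finset.mem_range] at *
      rw [if_neg (by omega)]; ring
  have P2 : (∑ s ∈ Finset.range (2 * m + 1), ∑ r ∈ Finset.range (2 * m + 1),
        (x ^ 2) ^ s * (if s + r = 2 * m then u * ((2 * m).choose s : R) * v ^ r else 0)
          * (y ^ 2) ^ r)
      = u * (x ^ 2 + v * y ^ 2) ^ (2 * m) := by
    rw [add_pow, Finset.mul_sum]
    apply Finset.sum_congr rfl
    intro s hs
    simp only [Finset.mem_range] at hs
    rw [Finset.sum_eq_single (2 * m - s)]
    · rw [if_pos (by omega), mul_pow]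
      have : 2 * m - s + s = 2 * m := by omega
      ring
    · intro r _ hr
      rw [if_neg (by omega)]; ring
    · intro habs
      exact absurd (Finset.mem_range.mpr (by omega)) habs
  rw [P1, P2]


lemma det_Cmat {R : Type*} [CommRing R] (m : ℕ) (hm : 1 ≤ m) (u v : R) :
    (Cmat m u v).det
      = (-1 : R) ^ (m * (2 * m + 1)) * u ^ (2 * m + 1) * v ^ (m * (2 * m + 1))
        * ∏ r ∈ Finset.range (2 * m + 1), ((2 * m).choose r : R) := by
  have hzero : ∀ i j : Fin (2 * m + 1), 2 * m + 1 - 1 < (i : ℕ) + (j : ℕ) →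
      Cmat m u v i j = 0 := by
    intro i j hij
    simp only [Cmat, Matrix.of_apply]
    rw [if_neg (by omega), if_neg (by omega)]
    ring
  rw [antidiag_det _ _ hzero]
  have hexp : (2 * m + 1).choose 2 = m * (2 * m + 1) := by
    rw [Nat.choose_two_right]
    have h1 : (2 * m + 1) * (2 * m + 1 - 1) = m * (2 * m + 1) * 2 := by
      simp only [Nat.add_sub_cancel]; ring
    rw [h1, Nat.mul_div_cancel _ (by norm_num)]
  have hdiag : ∀ i : Fin (2 * m + 1),
      Cmat m u v i (Fin.rev i) = u * ((2 * m).choose (i : ℕ) : R) * v ^ (2 * m - (i : ℕ)) := by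
    intro i
    have hrev : ((Fin.rev i : Fin (2 * m + 1)) : ℕ) = 2 * m - (i : ℕ) := by
      rw [Fin.val_rev]; omega
    simp only [Cmat, Matrix.of_apply, hrev]
    have hi : (i : ℕ) ≤ 2 * m := by omega
    rw [if_neg (by omega), if_pos (by omega)]
    ring
  rw [Finset.prod_congr rfl (fun i _ => hdiag i)]
  rw [Fin.prod_univ_eq_prod_range (fun i => u * ((2 * m).choose i : R) * v ^ (2 * m - i))]
  have hsum : ∑ i ∈ Finset.range (2 * m + 1), (2 * m - i) = m * (2 * m + 1) := by
    have h0 : ∑ i ∈ Finset.range (2 * m + 1), (2 * m - i)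
        = ∑ i ∈ Finset.range (2 * m + 1), i := by
      have := Finset.sum_range_reflect (fun i => i) (2 * m + 1)
      simpa using this
    have h2 : (∑ i ∈ Finset.range (2 * m + 1), i) * 2 = m * (2 * m + 1) * 2 := by
      rw [Finset.sum_range_id_mul_two]
      simp only [Nat.add_sub_cancel]; ring
    have := Nat.eq_of_mul_eq_mul_right (by norm_num : 0 < 2) h2
    omega
  rw [Finset.prod_mul_distrib, Finset.prod_mul_distrib, Finset.prod_const,
      Finset.prod_pow_eq_pow_sum, hsum, Finset.card_range, hexp]
  ring


/-- Uniform exact congruence for the determinant in Sun's Conjecture 4.10(i),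
over any half-system modulo sign and all parameters `u, v ∈ 𝔽_p`. -/
theorem stmt_12 (m : ℕ) (hm : 1 ≤ m) (p : ℕ) (hpm : p = 4 * m + 1) [Fact p.Prime]
    (χ : ZMod p → ZMod p)
    (hχ : ∀ x : ZMod p, χ x = ((quadraticChar (ZMod p) x : ℤ) : ZMod p))
    (a : Fin (2 * m + 1) → ZMod p)
    (ha : ∀ i j : Fin (2 * m + 1), i ≠ j → a i ^ 2 ≠ a j ^ 2)
    (u v : ZMod p) :
    (Matrix.of fun i j : Fin (2 * m + 1) =>
        χ (a i + a j) + χ (a i - a j) + u * χ (a i ^ 2 + v * a j ^ 2)).det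
      = (-1 : ZMod p) ^ (m * (2 * m + 1)) * u ^ (2 * m + 1) * v ^ (m * (2 * m + 1))
        * ((∏ r ∈ Finset.range (2 * m + 1), Nat.choose (2 * m) r : ℕ) : ZMod p)
        * ∏ j : Fin (2 * m + 1), ∏ i ∈ Finset.univ.filter (fun i : Fin (2 * m + 1) => i < j),
            (a j ^ 2 - a i ^ 2) ^ 2 := by
  have hNZ : NeZero p := ⟨by omega⟩
  -- Euler's criterion
  have hchar : ∀ x : ZMod p, χ x = x ^ (2 * m) := by
    intro x
    rw [hχ]
    have hp2 : ringChar (ZMod p) ≠ 2 := by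
      rw [ZMod.ringChar_zmod_n]; omega
    have h := quadraticChar_eq_pow_of_char_ne_two' hp2 x
    rw [h]
    congr 1
    rw [ZMod.card p]
    omega
  -- the Vandermonde matrix
  set V : Matrix (Fin (2 * m + 1)) (Fin (2 * m + 1)) (ZMod p) :=
    Matrix.vandermonde (fun i => a i ^ 2) with hV
  have hM : (Matrix.of fun i j : Fin (2 * m + 1) =>
        χ (a i + a j) + χ (a i - a j) + u * χ (a i ^ 2 + v * a j ^ 2))
      = V * Cmat m u v * Vᵀ := by
    ext i j
    simp only [Matrix.mul_apply, Matrix.transpose_apply, Matrix.of_apply, hV,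
      Matrix.vandermonde_apply]
    rw [hchar, hchar, hchar, entry_eq m u v (a i) (a j)]
    rw [Finset.sum_comm]
    refine Finset.sum_congr rfl fun r _ => ?_
    rw [Finset.sum_mul]
  rw [hM, Matrix.det_mul, Matrix.det_mul, Matrix.det_transpose, det_Cmat m hm u v,
    Matrix.det_vandermonde]
  -- product rearrangement
  have hIio : ∀ j : Fin (2 * m + 1),
      Finset.univ.filter (fun i : Fin (2 * m + 1) => i < j) = Finset.Iio j := by
    intro j; ext i; simp
  have hswap : (∏ i : Fin (2 * m + 1), ∏ j ∈ Finset.Ioi i, (a j ^ 2 - a i ^ 2))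
      = ∏ j : Fin (2 * m + 1), ∏ i ∈ Finset.Iio j, (a j ^ 2 - a i ^ 2) := by
    apply Finset.prod_comm'
    intro i j
    simp [and_comm]
  simp only [hIio]
  rw [hswap, Nat.cast_prod]
  have hsq : (∏ j : Fin (2 * m + 1), ∏ i ∈ Finset.Iio j, (a j ^ 2 - a i ^ 2))
      * (∏ j : Fin (2 * m + 1), ∏ i ∈ Finset.Iio j, (a j ^ 2 - a i ^ 2))
      = ∏ j : Fin (2 * m + 1), ∏ i ∈ Finset.Iio j, (a j ^ 2 - a i ^ 2) ^ 2 := by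
    rw [← Finset.prod_mul_distrib]
    apply Finset.prod_congr rfl
    intro j _
    rw [← Finset.prod_mul_distrib]
    apply Finset.prod_congr rfl
    intro i _
    ring
  rw [← hsq]
  ring
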